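/- Assume that p ↦ ε(T(p), T(p)) is constant on N and that γ(p) is ε-symmetric for every p ∈ N. Then γ itself satisfies condition (∗); and moreover, every map γ̃ : N → End_ℂ(A) with γ̃(p) ε-symmetric for all p which satisfies condition (∗) is of the form γ̃(p) = γ(p) + L_{x(p)} for all p ∈ N, where x(p) := γ̃(p)(T(p)) · T(p)^{-1} and L_x ∈ End_ℂ(A) denotes multiplication by x (L_x(v) = x·v). -/

import Mathlib

/-- (Steps 4 and 5 of Lemma 21 of the paper.) In the setting of Lemma 21,
assume `p ↦ ε(T p, T p)` is constant on `N` and `γ p` is `ε`-symmetric for every `p ∈ N`.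
Then `γ` itself satisfies condition (∗); and every `γ̃ : N → End_ℂ(A)` with `γ̃ p`
`ε`-symmetric on `N` satisfying (∗) equals `γ p + L_{x p}` where
`x p := γ̃ p (T p) · (T p)⁻¹` and `L_x` is multiplication by `x`. -/
theorem stmt10 {A : Type*} [NormedCommRing A] [NormedAlgebra ℂ A] [FiniteDimensional ℂ A]
    (ε : A →ₗ[ℂ] A →ₗ[ℂ] ℂ)
    (hεsym : ∀ x y : A, ε x y = ε y x)
    (hεnd : ∀ x : A, (∀ y : A, ε x y = 0) → x = 0)
    (hεinv : ∀ x y z : A, ε (x * y) z = ε x (y * z))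
    (N : Set A) (hNopen : IsOpen N) (hNconn : IsConnected N)
    (T : A → A) (hT : ∀ p ∈ N, DifferentiableAt ℂ T p)
    (hTinv : ∀ p ∈ N, IsUnit (T p))
    (γ : A → Module.End ℂ A)
    (hγdef : ∀ p ∈ N, ∀ u v : A,
      ε (T p * γ p v) u = fderiv ℂ (fun q => ε (T q) v) p u)
    (hconst : ∃ c : ℂ, ∀ p ∈ N, ε (T p) (T p) = c)
    (hγsym : ∀ p ∈ N, ∀ x y : A, ε (γ p x) y = ε x (γ p y)) :
    (∀ p ∈ N, ∀ u v : A,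
        fderiv ℂ (fun q => ε (T q) v) p u = ε (T p) (u * γ p v - γ p (u * v))) ∧
      ∀ γt : A → Module.End ℂ A,
        (∀ p ∈ N, ∀ x y : A, ε (γt p x) y = ε x (γt p y)) →
        (∀ p ∈ N, ∀ u v : A,
          fderiv ℂ (fun q => ε (T q) v) p u = ε (T p) (u * γt p v - γt p (u * v))) →
        ∀ p ∈ N, ∀ v : A,
          γt p v = γ p v + (γt p (T p) * Ring.inverse (T p)) * v := by
  classical
  obtain ⟨c, hc⟩ := hconst
  -- continuous bilinear version of ε
  set εc : A →L[ℂ] A →L[ℂ] ℂ :=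
    LinearMap.toContinuousLinearMap
      (((LinearMap.toContinuousLinearMap :
          (A →ₗ[ℂ] ℂ) ≃ₗ[ℂ] (A →L[ℂ] ℂ)) : (A →ₗ[ℂ] ℂ) →ₗ[ℂ] (A →L[ℂ] ℂ)).comp ε) with hεcdef
  have hεc : ∀ x y : A, εc x y = ε x y := fun x y => rfl
  -- derivative formula
  have hder : ∀ p ∈ N, ∀ v u : A,
      fderiv ℂ (fun q => ε (T q) v) p u = ε (fderiv ℂ T p u) v := by
    intro p hp v u
    have hDT : HasFDerivAt T (fderiv ℂ T p) p := (hT p hp).hasFDerivAt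
    have h1 : HasFDerivAt (fun q => ε (T q) v)
        ((εc.flip v).comp (fderiv ℂ T p)) p := by
      have := ((εc.flip v).hasFDerivAt (x := T p)).comp p hDT
      simpa [Function.comp_def, hεc] using this
    rw [h1.fderiv]
    simp [hεc]
  -- derivative of the diagonal vanishes
  have hdiag : ∀ p ∈ N, ∀ u : A, ε (fderiv ℂ T p u) (T p) = 0 := by
    intro p hp u
    have hDT : HasFDerivAt T (fderiv ℂ T p) p := (hT p hp).hasFDerivAt
    have hbb := εc.isBoundedBilinearMap
    have hprod : HasFDerivAt (fun q => (T q, T q))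
        ((fderiv ℂ T p).prod (fderiv ℂ T p)) p := HasFDerivAt.prodMk hDT hDT
    have hg : HasFDerivAt (fun q => ε (T q) (T q))
        ((hbb.deriv (T p, T p)).comp ((fderiv ℂ T p).prod (fderiv ℂ T p))) p := by
      have := (hbb.hasFDerivAt (T p, T p)).comp p hprod
      simpa [Function.comp_def, hεc] using this
    have hconst0 : fderiv ℂ (fun q => ε (T q) (T q)) p = 0 := by
      have hev : (fun q => ε (T q) (T q)) =ᶠ[nhds p] (fun _ => c) := by
        filter_upwards [hNopen.mem_nhds hp] with q hq using hc q hq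
      rw [hev.fderiv_eq]
      exact fderiv_const_apply c
    have h0 : ((hbb.deriv (T p, T p)).comp ((fderiv ℂ T p).prod (fderiv ℂ T p))) u = 0 := by
      rw [← hg.fderiv, hconst0]; rfl
    have h0' : ε (T p) (fderiv ℂ T p u) + ε (fderiv ℂ T p u) (T p) = 0 := by
      simpa [hεc] using h0
    have := hεsym (T p) (fderiv ℂ T p u)
    have h2 : (2 : ℂ) * ε (fderiv ℂ T p u) (T p) = 0 := by linear_combination h0' - this
    have := mul_eq_zero.mp h2
    simpa using this
  -- γ p (T p) = 0
  have hγT : ∀ p ∈ N, γ p (T p) = 0 := by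
    intro p hp
    have hz : T p * γ p (T p) = 0 := by
      apply hεnd
      intro y
      rw [hγdef p hp y (T p), hder p hp (T p) y]
      exact hdiag p hp y
    have hu := hTinv p hp
    have : T p * γ p (T p) = T p * 0 := by simpa using hz
    exact hu.mul_left_cancel this
  -- ε (T p) (γ p w) = 0 for all w
  have hortho : ∀ p ∈ N, ∀ w : A, ε (T p) (γ p w) = 0 := by
    intro p hp w
    rw [hεsym, hγsym p hp, hγT p hp]
    simp
  -- Part 1
  have part1 : ∀ p ∈ N, ∀ u v : A,
      fderiv ℂ (fun q => ε (T q) v) p u = ε (T p) (u * γ p v - γ p (u * v)) := by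
    intro p hp u v
    rw [← hγdef p hp u v, hεinv, map_sub, hortho p hp, mul_comm (γ p v) u]
    ring
  refine ⟨part1, ?_⟩
  intro γt hγtsym hγtstar p hp v
  -- the key identity: γt (T p * u) = γ p (T p * u) + γt (T p) * u
  have key : ∀ u : A, γt p (T p * u) = γ p (T p * u) + γt p (T p) * u := by
    intro u
    have hnd : ∀ y : A, ε (γt p (T p * u) - (γ p (T p * u) + γt p (T p) * u)) y = 0 := by
      intro y
      have e1 : fderiv ℂ (fun q => ε (T q) y) p u = ε (T p) (u * γt p y - γt p (u * y)) :=
        hγtstar p hp u y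
      have e2 : fderiv ℂ (fun q => ε (T q) y) p u = ε (T p) (u * γ p y) := by
        rw [part1 p hp u y, map_sub, hortho p hp]; ring
      have e3 : ε (T p) (u * γt p y - γt p (u * y)) = ε (T p) (u * γ p y) := by
        rw [← e1, e2]
      -- rewrite all three terms as ε (·) y
      have t1 : ε (T p) (u * γt p y) = ε (γt p (T p * u)) y := by
        rw [← hεinv]; exact (hγtsym p hp _ _).symm
      have t2 : ε (T p) (γt p (u * y)) = ε (γt p (T p) * u) y := by
        rw [← hγtsym p hp, ← hεinv]
      have t3 : ε (T p) (u * γ p y) = ε (γ p (T p * u)) y := by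
        rw [← hεinv]; exact (hγsym p hp _ _).symm
      rw [map_sub, t1, t2, t3] at e3
      simp only [map_sub, map_add, LinearMap.sub_apply, LinearMap.add_apply]
      linear_combination e3
    exact sub_eq_zero.mp (hεnd _ hnd)
  have hu := hTinv p hp
  have hval := key (Ring.inverse (T p) * v)
  have hTv : T p * (Ring.inverse (T p) * v) = v := by
    rw [← mul_assoc, Ring.mul_inverse_cancel _ hu, one_mul]
  rw [hTv] at hval
  rw [hval, mul_assoc]
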